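/- Let R be a ring whose only idempotents are 0 and 1. Then R is GNC if and only if R is a local ring with nil Jacobson radical. -/
import Mathlib


/-- An element is nil-clean if it is the sum of an idempotent and a nilpotent. -/
def IsNilClean {R : Type*} [Ring R] (a : R) : Prop :=
  ∃ e q : R, IsIdempotentElem e ∧ IsNilpotent q ∧ a = e + q

/-- A ring is GNC (generalized nil-clean) if every non-unit is nil-clean. -/
def IsGNC (R : Type*) [Ring R] : Prop :=
  ∀ a : R, ¬ IsUnit a → IsNilClean a

/-- In a ring with trivial idempotents, left invertible elements are units. -/
lemma isUnit_of_left_inv {R : Type*} [Ring R] [Nontrivial R]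
    (h : ∀ e : R, IsIdempotentElem e → e = 0 ∨ e = 1)
    {a b : R} (hba : b * a = 1) : IsUnit a := by
  have he : IsIdempotentElem (a * b) := by
    unfold IsIdempotentElem
    calc a * b * (a * b) = a * (b * a * b) := by noncomm_ring
    _ = a * b := by rw [hba, one_mul]
  rcases h _ he with h0 | h1
  · exfalso
    have ha0 : a = 0 := by
      have : a * (b * a) = (a * b) * a := by noncomm_ring
      rw [hba, h0] at this; simpa using this
    rw [ha0, mul_zero] at hba
    exact one_ne_zero hba.symm
  · exact ⟨⟨a, b, h1, hba⟩, rfl⟩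

theorem gnc_iff_local_of_trivial_idempotents {R : Type*} [Ring R] [Nontrivial R]
    (h : ∀ e : R, IsIdempotentElem e → e = 0 ∨ e = 1) :
    IsGNC R ↔ (IsLocalRing R ∧ ∀ x ∈ ((⊥ : Ideal R).jacobson), IsNilpotent x) := by
  constructor
  · intro hg
    have key : ∀ a : R, ¬ IsUnit a → IsNilpotent a := by
      intro a ha
      obtain ⟨e, q, he, hq, rfl⟩ := hg a ha
      rcases h e he with rfl | rfl
      · simpa using hq
      · exact absurd hq.isUnit_one_add ha
    constructor
    · refine ⟨fun {a b} hab => ?_⟩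
      by_cases ha : IsUnit a
      · exact Or.inl ha
      · have hb : b = 1 - a := eq_sub_of_add_eq' hab
        exact Or.inr (hb ▸ (key a ha).isUnit_one_sub)
    · intro x hx
      refine key x (fun hu => ?_)
      obtain ⟨M, hM⟩ := Ideal.exists_maximal R
      have hle : (⊥ : Ideal R).jacobson ≤ M := sInf_le ⟨bot_le, hM⟩
      exact hM.ne_top (Ideal.eq_top_of_isUnit_mem M (hle hx) hu)
  · rintro ⟨hl, hnil⟩ a ha
    refine ⟨0, a, IsIdempotentElem.zero, hnil a ?_, by simp⟩
    refine Submodule.mem_sInf.2 (fun J hJ => ?_)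
    obtain ⟨-, hJm⟩ := hJ
    by_contra haJ
    have hlt : J < J ⊔ Ideal.span {a} := by
      refine lt_of_le_of_ne le_sup_left (fun hEq => haJ ?_)
      have : a ∈ J ⊔ Ideal.span {a} :=
        Submodule.mem_sup_right (Ideal.mem_span_singleton_self a)
      rwa [← hEq] at this
    have htop : J ⊔ Ideal.span {a} = ⊤ := hJm.out.2 _ hlt
    have h1 : (1 : R) ∈ J ⊔ Ideal.span {a} := htop ▸ Submodule.mem_top
    obtain ⟨m, hm, y, hy, hmy⟩ := Submodule.mem_sup.1 h1
    obtain ⟨r, hr⟩ := Submodule.mem_span_singleton.1 hy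
    have hmu : ¬ IsUnit m := fun hu => hJm.ne_top (Ideal.eq_top_of_isUnit_mem J hm hu)
    have : IsUnit m ∨ IsUnit y := IsLocalRing.isUnit_or_isUnit_of_add_one hmy
    rcases this with hu | hu
    · exact hmu hu
    · obtain ⟨u, hu'⟩ := hu
      have hba : ((↑u⁻¹ : R) * r) * a = 1 := by
        have : (↑u⁻¹ : R) * y = 1 := by rw [← hu']; exact u.inv_mul
        rw [← hr, smul_eq_mul, ← mul_assoc] at this
        exact this
      exact ha (isUnit_of_left_inv h hba)
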